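/- Let n ≥ 3. There do not exist finitely many vectors β₁, …, β_k ∈ ℝ^n such that for every v ∈ ℝ^n, max_{1 ≤ i ≤ n} |v_i| = Σ_{j=1}^k |⟨β_j, v⟩|. In other words, the supremum norm ‖·‖_∞ on ℝ^n (whose unit ball is the cube [−1,1]^n) cannot be written as a finite sum of absolute values of linear functionals. -/

import Mathlib

private lemma hlawka (a b c : ℝ) :
    |a+b| + |b+c| + |c+a| ≤ |a| + |b| + |c| + |a+b+c| := by
  rcases abs_cases a with ⟨h1,h1'⟩|⟨h1,h1'⟩ <;>
  rcases abs_cases b with ⟨h2,h2'⟩|⟨h2,h2'⟩ <;>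
  rcases abs_cases c with ⟨h3,h3'⟩|⟨h3,h3'⟩ <;>
  rcases abs_cases (a+b) with ⟨h4,h4'⟩|⟨h4,h4'⟩ <;>
  rcases abs_cases (b+c) with ⟨h5,h5'⟩|⟨h5,h5'⟩ <;>
  rcases abs_cases (c+a) with ⟨h6,h6'⟩|⟨h6,h6'⟩ <;>
  rcases abs_cases (a+b+c) with ⟨h7,h7'⟩|⟨h7,h7'⟩ <;>
  linarith

private lemma sup_abs_eq {n : ℕ} [NeZero n] (v : EuclideanSpace ℝ (Fin n)) (m : ℝ)
    (h1 : ∀ i, |v i| ≤ m) (i0 : Fin n) (h2 : |v i0| = m) :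
    (⨆ i : Fin n, |v i|) = m := by
  refine le_antisymm (ciSup_le h1) ?_
  calc m = |v i0| := h2.symm
    _ ≤ ⨆ i, |v i| :=
      le_ciSup (f := fun i => |v i|) (Set.Finite.bddAbove (Set.finite_range _)) i0

theorem sup_norm_not_sum_abs_inner (n : ℕ) (hn : 3 ≤ n) :
    ¬ ∃ (k : ℕ) (β : Fin k → EuclideanSpace ℝ (Fin n)),
        ∀ v : EuclideanSpace ℝ (Fin n),
          (⨆ i : Fin n, |v i|) = ∑ j, |(inner ℝ (β j) v : ℝ)| := by
  have : NeZero n := ⟨by omega⟩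
  rintro ⟨k, β, h⟩
  obtain ⟨i0, i1, i2, h01, h02, h12⟩ :
      ∃ a b c : Fin n, a ≠ b ∧ a ≠ c ∧ b ≠ c :=
    ⟨⟨0, by omega⟩, ⟨1, by omega⟩, ⟨2, by omega⟩,
      by simp [Fin.ext_iff], by simp [Fin.ext_iff], by simp [Fin.ext_iff]⟩
  set x : EuclideanSpace ℝ (Fin n) :=
    EuclideanSpace.single i0 1 + EuclideanSpace.single i1 1 with hx
  set y : EuclideanSpace ℝ (Fin n) :=
    EuclideanSpace.single i1 1 + EuclideanSpace.single i2 1 with hy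
  set z : EuclideanSpace ℝ (Fin n) :=
    EuclideanSpace.single i2 1 + EuclideanSpace.single i0 1 with hz
  -- coordinate descriptions
  have hxapp : ∀ i, x i = (if i = i0 then (1:ℝ) else 0) + (if i = i1 then 1 else 0) := by
    intro i; simp [hx, EuclideanSpace.single_apply]
  have hyapp : ∀ i, y i = (if i = i1 then (1:ℝ) else 0) + (if i = i2 then 1 else 0) := by
    intro i; simp [hy, EuclideanSpace.single_apply]
  have hzapp : ∀ i, z i = (if i = i2 then (1:ℝ) else 0) + (if i = i0 then 1 else 0) := by
    intro i; simp [hz, EuclideanSpace.single_apply]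
  -- sup norms
  have hsx : (⨆ i, |x i|) = 1 := by
    refine sup_abs_eq x 1 ?_ i0 ?_
    · intro i; rw [hxapp i]
      rcases eq_or_ne i i0 with p|p <;> rcases eq_or_ne i i1 with q|q <;>
        simp [p, q, h01, h01.symm] <;> norm_num
    · rw [hxapp i0]; simp [h01]
  have hsy : (⨆ i, |y i|) = 1 := by
    refine sup_abs_eq y 1 ?_ i1 ?_
    · intro i; rw [hyapp i]
      rcases eq_or_ne i i1 with p|p <;> rcases eq_or_ne i i2 with q|q <;>
        simp [p, q, h12, h12.symm] <;> norm_num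
    · rw [hyapp i1]; simp [h12]
  have hsz : (⨆ i, |z i|) = 1 := by
    refine sup_abs_eq z 1 ?_ i2 ?_
    · intro i; rw [hzapp i]
      rcases eq_or_ne i i2 with p|p <;> rcases eq_or_ne i i0 with q|q <;>
        simp [p, q, h02, h02.symm] <;> norm_num
    · rw [hzapp i2]; simp [h02.symm]
  have hsxy : (⨆ i, |(x + y) i|) = 2 := by
    refine sup_abs_eq (x + y) 2 ?_ i1 ?_
    · intro i
      have e : (x + y) i = x i + y i := rfl
      rw [e, hxapp i, hyapp i]
      rcases eq_or_ne i i0 with p|p <;> rcases eq_or_ne i i1 with q|q <;>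
        rcases eq_or_ne i i2 with r|r <;>
        simp [p, q, r, h01, h01.symm, h02, h02.symm, h12, h12.symm] <;> norm_num
    · have e : (x + y) i1 = x i1 + y i1 := rfl
      rw [e, hxapp i1, hyapp i1]
      simp [h01.symm, h12]; norm_num
  have hsyz : (⨆ i, |(y + z) i|) = 2 := by
    refine sup_abs_eq (y + z) 2 ?_ i2 ?_
    · intro i
      have e : (y + z) i = y i + z i := rfl
      rw [e, hyapp i, hzapp i]
      rcases eq_or_ne i i0 with p|p <;> rcases eq_or_ne i i1 with q|q <;>
        rcases eq_or_ne i i2 with r|r <;>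
        simp [p, q, r, h01, h01.symm, h02, h02.symm, h12, h12.symm] <;> norm_num
    · have e : (y + z) i2 = y i2 + z i2 := rfl
      rw [e, hyapp i2, hzapp i2]
      simp [h12.symm, h02.symm]; norm_num
  have hszx : (⨆ i, |(z + x) i|) = 2 := by
    refine sup_abs_eq (z + x) 2 ?_ i0 ?_
    · intro i
      have e : (z + x) i = z i + x i := rfl
      rw [e, hzapp i, hxapp i]
      rcases eq_or_ne i i0 with p|p <;> rcases eq_or_ne i i1 with q|q <;>
        rcases eq_or_ne i i2 with r|r <;>
        simp [p, q, r, h01, h01.symm, h02, h02.symm, h12, h12.symm] <;> norm_num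
    · have e : (z + x) i0 = z i0 + x i0 := rfl
      rw [e, hzapp i0, hxapp i0]
      simp [h02, h01]; norm_num
  have hsxyz : (⨆ i, |(x + y + z) i|) = 2 := by
    refine sup_abs_eq (x + y + z) 2 ?_ i0 ?_
    · intro i
      have e : (x + y + z) i = x i + y i + z i := rfl
      rw [e, hxapp i, hyapp i, hzapp i]
      rcases eq_or_ne i i0 with p|p <;> rcases eq_or_ne i i1 with q|q <;>
        rcases eq_or_ne i i2 with r|r <;>
        simp [p, q, r, h01, h01.symm, h02, h02.symm, h12, h12.symm] <;> norm_num
    · have e : (x + y + z) i0 = x i0 + y i0 + z i0 := rfl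
      rw [e, hxapp i0, hyapp i0, hzapp i0]
      simp [h01, h02]; norm_num
  -- Hlawka inequality for the sum of absolute values of inner products
  have key : (∑ j, |(inner ℝ (β j) (x+y) : ℝ)|) + (∑ j, |(inner ℝ (β j) (y+z) : ℝ)|)
      + (∑ j, |(inner ℝ (β j) (z+x) : ℝ)|)
      ≤ (∑ j, |(inner ℝ (β j) x : ℝ)|) + (∑ j, |(inner ℝ (β j) y : ℝ)|)
        + (∑ j, |(inner ℝ (β j) z : ℝ)|) + (∑ j, |(inner ℝ (β j) (x+y+z) : ℝ)|) := by
    simp only [← Finset.sum_add_distrib]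
    refine Finset.sum_le_sum fun j _ => ?_
    have e1 : (inner ℝ (β j) (x+y) : ℝ) = inner ℝ (β j) x + inner ℝ (β j) y := inner_add_right _ _ _
    have e2 : (inner ℝ (β j) (y+z) : ℝ) = inner ℝ (β j) y + inner ℝ (β j) z := inner_add_right _ _ _
    have e3 : (inner ℝ (β j) (z+x) : ℝ) = inner ℝ (β j) z + inner ℝ (β j) x := inner_add_right _ _ _
    have e4 : (inner ℝ (β j) (x+y+z) : ℝ) = inner ℝ (β j) x + inner ℝ (β j) y + inner ℝ (β j) z := by
      rw [inner_add_right, inner_add_right]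
    rw [e1, e2, e3, e4]
    exact hlawka _ _ _
  rw [← h x, ← h y, ← h z, ← h (x+y), ← h (y+z), ← h (z+x), ← h (x+y+z)] at key
  rw [hsx, hsy, hsz, hsxy, hsyz, hszx, hsxyz] at key
  linarith
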